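/- Let λ ≠ 0 be a real number. Every complex root z of the quadratic factor q_λ satisfies |z| < 1 if and only if λ < −1 or λ > 1/3. (This characterizes the zero-stability region of ZeroSNet.) -/

import Mathlib

/-- The quadratic factor of the ZeroSNet characteristic polynomial over ℂ (real parameter λ):
`q_λ(ρ) = ρ² + ((λ−3)/(4λ))ρ + (1+λ)/(4λ)`. -/
noncomputable def zerosQuadFactor (l : ℝ) (ρ : ℂ) : ℂ :=
  ρ ^ 2 + (((l : ℂ) - 3) / (4 * (l : ℂ))) * ρ + (1 + (l : ℂ)) / (4 * (l : ℂ))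

/-- A real root of a monic quadratic with `q(1)>0`, `q(-1)>0`, `c<1` lies in `(-1,1)`. -/
lemma zerosnet_aux (t b c : ℝ) (hr : t ^ 2 + b * t + c = 0)
    (h1 : 1 + b + c > 0) (h2 : 1 - b + c > 0) (hcl : c < 1) : t ^ 2 < 1 := by
  by_contra hcon
  push_neg at hcon
  set s : ℝ := -b - t with hs
  have hst : t * s = c := by rw [hs]; linear_combination -hr
  have e1 : (1 - t) * (1 - s) > 0 := by
    have : (1 - t) * (1 - s) = 1 + b + c := by rw [hs]; linear_combination -hr
    linarith [this ▸ h1]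
  have e2 : (1 + t) * (1 + s) > 0 := by
    have : (1 + t) * (1 + s) = 1 - b + c := by rw [hs]; linear_combination -hr
    linarith [this ▸ h2]
  rcases le_or_gt 1 t with ht | ht
  · have hs1 : 1 < s := by nlinarith [e1, ht]
    nlinarith [hst, hcl, hs1, ht]
  · have ht' : t ≤ -1 := by nlinarith [hcon, ht]
    have hs1 : s < -1 := by nlinarith [e2, ht']
    nlinarith [hst, hcl, hs1, ht']

/-- Zero-stability region of ZeroSNet: every complex root of the quadratic factor `q_λ` has
modulus strictly less than 1 if and only if `λ < −1` or `λ > 1/3`. -/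
theorem zerosnet_stability_region (l : ℝ) (hl : l ≠ 0) :
    (∀ z : ℂ, zerosQuadFactor l z = 0 → ‖z‖ < 1) ↔ (l < -1 ∨ 1 / 3 < l) := by
  have hlC : (l : ℂ) ≠ 0 := Complex.ofReal_ne_zero.mpr hl
  set b : ℝ := (l - 3) / (4 * l) with hbdef
  set c : ℝ := (1 + l) / (4 * l) with hcdef
  have hb : 4 * l * b = l - 3 := by rw [hbdef]; field_simp
  have hc : 4 * l * c = 1 + l := by rw [hcdef]; field_simp
  have hq : ∀ z : ℂ, zerosQuadFactor l z = z ^ 2 + (b : ℂ) * z + (c : ℂ) := by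
    intro z
    unfold zerosQuadFactor
    rw [hbdef, hcdef]
    push_cast
    ring
  constructor
  · intro H
    rcases le_or_gt 0 (b ^ 2 - 4 * c) with hD | hD
    · -- real roots
      set s : ℝ := Real.sqrt (b ^ 2 - 4 * c) with hsdef
      have hs : s ^ 2 = b ^ 2 - 4 * c := Real.sq_sqrt hD
      have root : ∀ r : ℝ, r ^ 2 + b * r + c = 0 → |r| < 1 := by
        intro r hr
        have := H (r : ℂ) (by rw [hq]; exact_mod_cast congrArg (Complex.ofReal) hr)
        rwa [Complex.norm_real, Real.norm_eq_abs] at this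
      have h1 : ((-b + s) / 2) ^ 2 + b * ((-b + s) / 2) + c = 0 := by
        linear_combination hs / 4
      have h2 : ((-b - s) / 2) ^ 2 + b * ((-b - s) / 2) + c = 0 := by
        linear_combination hs / 4
      have a1 := abs_lt.mp (root _ h1)
      have a2 := abs_lt.mp (root _ h2)
      have hq1 : 1 + b + c > 0 := by nlinarith [a1.1, a1.2, a2.1, a2.2, hs]
      have hqm1 : 1 - b + c > 0 := by nlinarith [a1.1, a1.2, a2.1, a2.2, hs]
      rcases lt_or_gt_of_ne hl with hneg | hpos
      · left; nlinarith [mul_neg_of_pos_of_neg hqm1 (by linarith : 4 * l < 0)]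
      · right; nlinarith [mul_pos hq1 (by linarith : (0:ℝ) < 4 * l)]
    · -- negative discriminant forces the region directly
      by_contra hcon
      push_neg at hcon
      obtain ⟨hm1, hm2⟩ := hcon
      have h16 : 16 * l ^ 2 * (b ^ 2 - 4 * c) < 0 :=
        mul_neg_of_pos_of_neg (by positivity) hD
      have hb2 : (4 * l * b) ^ 2 = (l - 3) ^ 2 := by rw [hb]
      have hc2 : 16 * l ^ 2 * c = 4 * l * (1 + l) := by
        have : 16 * l ^ 2 * c = 4 * l * (4 * l * c) := by ring
        rw [this, hc]
      have key : (l - 3) ^ 2 - 16 * l * (1 + l) < 0 := by nlinarith [h16, hb2, hc2]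
      nlinarith [key, mul_nonneg (by linarith : (0:ℝ) ≤ 5 * l + 9)
        (by linarith : (0:ℝ) ≤ 1 - 3 * l)]
  · intro hreg z hz
    rw [hq] at hz
    have hre : z.re ^ 2 - z.im ^ 2 + b * z.re + c = 0 := by
      have := congrArg Complex.re hz
      simp [pow_two, Complex.mul_re, Complex.mul_im] at this
      nlinarith [this]
    have him : 2 * z.re * z.im + b * z.im = 0 := by
      have := congrArg Complex.im hz
      simp [pow_two, Complex.mul_re, Complex.mul_im] at this
      nlinarith [this]
    have hc1 : c < 1 := by
      rcases hreg with h | h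
      · nlinarith [hc]
      · nlinarith [hc]
    have hq1 : 1 + b + c > 0 := by
      rcases hreg with h | h
      · nlinarith [hb, hc]
      · nlinarith [hb, hc]
    have hqm1 : 1 - b + c > 0 := by
      rcases hreg with h | h
      · nlinarith [hb, hc]
      · nlinarith [hb, hc]
    have habs : (‖z‖) ^ 2 < 1 := by
      rw [Complex.sq_norm, Complex.normSq_apply]
      rcases eq_or_ne z.im 0 with h0 | h0
      · rw [h0] at hre ⊢
        have hr : z.re ^ 2 + b * z.re + c = 0 := by nlinarith [hre]
        have := zerosnet_aux z.re b c hr hq1 hqm1 hc1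
        nlinarith [this]
      · have hbeq : b = -2 * z.re := by
          have h2 : z.im * (2 * z.re + b) = 0 := by linear_combination him
          rcases mul_eq_zero.mp h2 with h | h
          · exact absurd h h0
          · linarith
        nlinarith [hre, hbeq]
    exact lt_of_pow_lt_pow_left₀ 2 zero_le_one (by simpa using habs)
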